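/- For an even integer m > 0 and k ∈ {1,...,m/2 − 1}, with θ_k = 2√(πk), r_k = √(k/(m/2+1)), and p_k = r_k e^{iθ_k}, the distance between successive spiral poles satisfies |p_k − p_{k+1}| < 2πc_m, where c_m = 1/(2√(π(m+2)/2)). -/

import Mathlib

open Real

lemma aux_sin_lb (x : ℝ) (hx : 0 ≤ x) : x - x^3/6 ≤ Real.sin x := by
  have H : ∀ y : ℝ, HasDerivAt (fun t => Real.sin t - (t - t^3/6))
      (Real.cos y - (1 - y^2/2)) y := by
    intro y
    have h1 := (Real.hasDerivAt_sin y).sub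
      ((hasDerivAt_id y).sub ((hasDerivAt_pow 3 y).div_const 6))
    refine h1.congr_deriv ?_
    push_cast; ring
  have mono : Monotone (fun t => Real.sin t - (t - t^3/6)) := by
    apply monotone_of_deriv_nonneg (fun y => (H y).differentiableAt)
    intro y
    rw [(H y).deriv]
    have := Real.one_sub_sq_div_two_le_cos (x := y)
    linarith
  have := mono hx
  simpa using this

lemma aux_cos_ub (x : ℝ) (hx : 0 ≤ x) : Real.cos x ≤ 1 - x^2/2 + x^4/24 := by
  have H : ∀ y : ℝ, HasDerivAt (fun t => (1 - t^2/2 + t^4/24) - Real.cos t)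
      ((-(y) + y^3/6) + Real.sin y) y := by
    intro y
    have h1 := ((((hasDerivAt_pow 2 y).div_const 2).const_sub 1).add
      ((hasDerivAt_pow 4 y).div_const 24)).sub (Real.hasDerivAt_cos y)
    refine h1.congr_deriv ?_
    push_cast; ring
  have mono : MonotoneOn (fun t => (1 - t^2/2 + t^4/24) - Real.cos t) (Set.Ici 0) := by
    apply monotoneOn_of_deriv_nonneg (convex_Ici 0)
    · exact (Continuous.continuousOn (by continuity))
    · intro y _; exact (H y).differentiableAt.differentiableWithinAt
    · intro y hy
      rw [interior_Ici] at hy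
      rw [(H y).deriv]
      have := aux_sin_lb y hy.le
      linarith
  have := mono (Set.self_mem_Ici) hx hx
  simp at this
  linarith

lemma aux_sin_ub (x : ℝ) (hx : 0 ≤ x) : Real.sin x ≤ x - x^3/6 + x^5/120 := by
  have H : ∀ y : ℝ, HasDerivAt (fun t => (t - t^3/6 + t^5/120) - Real.sin t)
      (((1 - y^2/2) + y^4/24) - Real.cos y) y := by
    intro y
    have h1 := (((hasDerivAt_id y).sub ((hasDerivAt_pow 3 y).div_const 6)).add
      ((hasDerivAt_pow 5 y).div_const 120)).sub (Real.hasDerivAt_sin y)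
    refine h1.congr_deriv ?_
    push_cast; ring
  have mono : MonotoneOn (fun t => (t - t^3/6 + t^5/120) - Real.sin t) (Set.Ici 0) := by
    apply monotoneOn_of_deriv_nonneg (convex_Ici 0)
    · exact (Continuous.continuousOn (by continuity))
    · intro y _; exact (H y).differentiableAt.differentiableWithinAt
    · intro y hy
      rw [interior_Ici] at hy
      rw [(H y).deriv]
      have := aux_cos_ub y hy.le
      linarith
  have := mono (Set.self_mem_Ici) hx hx
  simp at this
  linarith

lemma core_ineq2 (s u : ℝ) (hs0 : 0 < s) (hu0 : 0 < u) (hu1 : u ≤ 9/10)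
    (hu2 : u ^ 2 = π * s ^ 2) :
    s^4 + (1 - s^4) * Real.sin u ^ 2 < π * s^2 := by
  have hsinnn : 0 ≤ Real.sin u :=
    Real.sin_nonneg_of_nonneg_of_le_pi hu0.le (by nlinarith [pi_gt_d6])
  have hsinle : Real.sin u ≤ u - u^3/6 + u^5/120 := aux_sin_ub u hu0.le
  have hPnn : 0 ≤ u - u^3/6 + u^5/120 := by nlinarith
  have hsin2 : Real.sin u ^ 2 ≤ (u - u^3/6 + u^5/120)^2 := by nlinarith
  have hP2 : (u - u^3/6 + u^5/120)^2 ≤ u^2 - u^4/3 + (2/45)*u^6 := by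
    nlinarith [mul_nonneg (pow_nonneg hu0.le 8) (show (0:ℝ) ≤ 40 - u^2 by nlinarith)]
  have hs4 : s^4 * π^2 = u^4 := by linear_combination (-(u^2) - π*s^2) * hu2
  have hπsq : (9.85:ℝ) < π^2 := by nlinarith [pi_gt_d6]
  have hu4 : 0 < u^4 := by positivity
  have hs4p : 0 < s^4 := by positivity
  have hu2b : u^2 ≤ 81/100 := by nlinarith [hu1, hu0]
  have hu6 : u^6 ≤ (81/100) * u^4 := by nlinarith [hu4, hu2b, mul_le_mul_of_nonneg_left hu2b hu4.le]
  have h9 : (9.85:ℝ) * s^4 < u^4 := by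
    have h := mul_lt_mul_of_pos_right hπsq hs4p
    linarith [h, hs4]
  have key : s^4 + Real.sin u ^2 < u^2 := by linarith [hsin2, hP2, hu6, h9, hu4]
  have hfac : (1 - s^4) * Real.sin u ^2 ≤ Real.sin u ^ 2 := by
    nlinarith [sq_nonneg (Real.sin u), hs4p]
  linarith [key, hfac, hu2.le, hu2.ge]

lemma dist_sq_eq (r1 r2 t1 t2 : ℝ) :
    (r1*Real.cos t1 - r2*Real.cos t2)^2 + (r1*Real.sin t1 - r2*Real.sin t2)^2
      = r1^2 + r2^2 - 2*r1*r2*Real.cos (t2 - t1) := by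
  rw [Real.cos_sub]
  linear_combination r1^2 * Real.sin_sq_add_cos_sq t1 + r2^2 * Real.sin_sq_add_cos_sq t2

lemma bridge (a b : ℝ) (ha1 : 1 ≤ a) (hab : a < b) (hsq : b^2 = a^2 + 1) :
    a^2 + b^2 - 2*(a*b)*Real.cos (2*(Real.sqrt π*(b-a))) < π := by
  have hsp : Real.sqrt π ^ 2 = π := Real.sq_sqrt pi_pos.le
  have hsppos : 0 < Real.sqrt π := Real.sqrt_pos.2 pi_pos
  have hs0 : 0 < b - a := by linarith
  have hprod : (b-a)*(a+b) = 1 := by linear_combination hsq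
  have hsum2 : 2 ≤ a + b := by linarith
  have hs12 : b - a ≤ 1/2 := by nlinarith [hprod, hs0, hsum2]
  have hspb : Real.sqrt π < 1.8 := by
    nlinarith [hsp, Real.sqrt_nonneg π, pi_lt_d2]
  have hu0 : 0 < Real.sqrt π * (b-a) := mul_pos hsppos hs0
  have hu1 : Real.sqrt π * (b-a) ≤ 9/10 := by nlinarith [hspb, hs12, hs0, hsppos]
  have hu2 : (Real.sqrt π * (b-a))^2 = π * (b-a)^2 := by rw [mul_pow, hsp]
  have C := core_ineq2 (b-a) (Real.sqrt π * (b-a)) hs0 hu0 hu1 hu2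
  have hcos : Real.cos (2*(Real.sqrt π*(b-a)))
      = 1 - 2*Real.sin (Real.sqrt π*(b-a))^2 := by
    rw [Real.cos_two_mul]
    linarith [Real.sin_sq_add_cos_sq (Real.sqrt π*(b-a))]
  rw [hcos]
  have hab4 : 4*(a*b)*(b-a)^2 = 1 - (b-a)^4 := by
    linear_combination ((b-a)*(a+b)+1)*hprod
  have hss : (0:ℝ) < (b-a)^2 := by positivity
  nlinarith [C, hab4, hss, sq_nonneg (Real.sin (Real.sqrt π*(b-a)))]

lemma abs_expr (r1 r2 t1 t2 : ℝ) :
    ‖(r1:ℂ) * Complex.exp (Complex.I * (t1:ℂ))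
        - (r2:ℂ) * Complex.exp (Complex.I * (t2:ℂ))‖
      = Real.sqrt ((r1*Real.cos t1 - r2*Real.cos t2)^2
          + (r1*Real.sin t1 - r2*Real.sin t2)^2) := by
  have e : (r1:ℂ) * Complex.exp (Complex.I * (t1:ℂ))
        - (r2:ℂ) * Complex.exp (Complex.I * (t2:ℂ))
      = ((r1*Real.cos t1 - r2*Real.cos t2 : ℝ):ℂ)
        + ((r1*Real.sin t1 - r2*Real.sin t2 : ℝ):ℂ) * Complex.I := by
    rw [mul_comm Complex.I ((t1:ℝ):ℂ), mul_comm Complex.I ((t2:ℝ):ℂ),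
      Complex.exp_mul_I, Complex.exp_mul_I, ← Complex.ofReal_cos, ← Complex.ofReal_sin,
      ← Complex.ofReal_cos, ← Complex.ofReal_sin]
    push_cast
    ring
  rw [e, Complex.norm_add_mul_I]

/-- successive spiral poles `p_k = r_k e^{iθ_k}`, `θ_k = 2√(πk)`,
`r_k = √(k/(m/2+1))`, satisfy `|p_k − p_{k+1}| < 2πc_m` for
`k ∈ {1,...,m/2−1}`, with `c_m = 1/(2√(π(m+2)/2))`. -/
theorem successive_pole_distance (m : ℕ) (hm : 0 < m) (hme : Even m) (k : ℕ)
    (hk1 : 1 ≤ k) (hk2 : k ≤ m / 2 - 1) :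
    ‖
        (((Real.sqrt ((k : ℝ) / ((m : ℝ) / 2 + 1)) : ℝ) : ℂ) *
            Complex.exp (Complex.I * ((2 * Real.sqrt (Real.pi * k) : ℝ) : ℂ))
          - ((Real.sqrt (((k : ℝ) + 1) / ((m : ℝ) / 2 + 1)) : ℝ) : ℂ) *
            Complex.exp (Complex.I * ((2 * Real.sqrt (Real.pi * ((k : ℝ) + 1)) : ℝ) : ℂ)))‖
      < 2 * Real.pi * (1 / (2 * Real.sqrt (Real.pi * ((m : ℝ) + 2) / 2))) := by
  have hN : (0:ℝ) < (m : ℝ)/2 + 1 := by positivity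
  have hk0 : (0:ℝ) ≤ (k:ℝ) := Nat.cast_nonneg k
  have ha2 : Real.sqrt (k:ℝ) ^2 = (k:ℝ) := Real.sq_sqrt hk0
  have hb2 : Real.sqrt ((k:ℝ)+1) ^2 = (k:ℝ)+1 := Real.sq_sqrt (by linarith)
  have ha1 : 1 ≤ Real.sqrt (k:ℝ) := by
    rw [show (1:ℝ) = Real.sqrt 1 from (Real.sqrt_one).symm]
    exact Real.sqrt_le_sqrt (by exact_mod_cast hk1)
  have hab : Real.sqrt (k:ℝ) < Real.sqrt ((k:ℝ)+1) := Real.sqrt_lt_sqrt hk0 (by linarith)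
  have hsN : Real.sqrt ((m : ℝ)/2 + 1) ^ 2 = (m : ℝ)/2 + 1 := Real.sq_sqrt hN.le
  have hsNpos : 0 < Real.sqrt ((m : ℝ)/2 + 1) := Real.sqrt_pos.2 hN
  have hsp : Real.sqrt π ^ 2 = π := Real.sq_sqrt pi_pos.le
  have hsppos : 0 < Real.sqrt π := Real.sqrt_pos.2 pi_pos
  have h1 : Real.sqrt ((k:ℝ)/((m : ℝ)/2 + 1))
      = Real.sqrt (k:ℝ) / Real.sqrt ((m : ℝ)/2 + 1) := Real.sqrt_div hk0 _
  have h2 : Real.sqrt (((k:ℝ)+1)/((m : ℝ)/2 + 1))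
      = Real.sqrt ((k:ℝ)+1) / Real.sqrt ((m : ℝ)/2 + 1) := Real.sqrt_div (by linarith) _
  have h3 : Real.sqrt (π * (k:ℝ)) = Real.sqrt π * Real.sqrt (k:ℝ) :=
    Real.sqrt_mul pi_pos.le _
  have h4 : Real.sqrt (π * ((k:ℝ)+1)) = Real.sqrt π * Real.sqrt ((k:ℝ)+1) :=
    Real.sqrt_mul pi_pos.le _
  have h5 : Real.sqrt (π * ((m:ℝ)+2)/2) = Real.sqrt π * Real.sqrt ((m : ℝ)/2 + 1) := by
    rw [show π * ((m:ℝ)+2)/2 = π * ((m : ℝ)/2 + 1) by ring, Real.sqrt_mul pi_pos.le]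
  rw [h1, h2, h3, h4, h5, abs_expr]
  have hRHSpos : 0 < 2 * π * (1 / (2 * (Real.sqrt π * Real.sqrt ((m : ℝ)/2 + 1)))) := by
    positivity
  rw [Real.sqrt_lt' hRHSpos, dist_sq_eq]
  set N : ℝ := (m : ℝ)/2 + 1
  set a : ℝ := Real.sqrt (k:ℝ)
  set b : ℝ := Real.sqrt ((k:ℝ)+1)
  have h6 : (Real.sqrt π * Real.sqrt N)^2 = π * N := by rw [mul_pow, hsp, hsN]
  have hRHS2 : (2 * π * (1 / (2 * (Real.sqrt π * Real.sqrt N))))^2 = π / N := by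
    field_simp
    linear_combination (-1:ℝ) * h6
  rw [hRHS2]
  have hθ : 2 * (Real.sqrt π * b) - 2 * (Real.sqrt π * a) = 2*(Real.sqrt π*(b-a)) := by ring
  have hrk : (a / Real.sqrt N)^2 = (k:ℝ)/N := by rw [div_pow, hsN, ha2]
  have hrk1 : (b / Real.sqrt N)^2 = ((k:ℝ)+1)/N := by rw [div_pow, hsN, hb2]
  have hprod2 : 2 * (a / Real.sqrt N) * (b / Real.sqrt N) = 2 * (a*b/N) := by
    rw [mul_assoc, div_mul_div_comm, ← sq, hsN]
  rw [hθ, hrk, hrk1, hprod2]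
  have hBB := bridge a b ha1 hab (by linarith [ha2, hb2])
  have hfrac : (k:ℝ)/N + ((k:ℝ)+1)/N - 2*(a*b/N)*Real.cos (2*(Real.sqrt π*(b-a)))
      = ((a^2 + b^2 - 2*(a*b)*Real.cos (2*(Real.sqrt π*(b-a)))))/N := by
    rw [ha2, hb2]; ring
  rw [hfrac]
  exact (div_lt_div_iff_of_pos_right hN).mpr hBB
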